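/- arXiv:2111.05975 — 3 statements merged into one kernel-verified Lean document; each statement's English description precedes it below -/
import Mathlib

section
/- A uniform space is compact if and only if it is Bourbaki-bounded and Bourbaki-complete. -/
open Filter Set

/-- The star of a set `A` with respect to a family of sets. -/
def starSet {X : Type*} (U : Set (Set X)) (A : Set X) : Set X :=
  ⋃ V ∈ {V ∈ U | (V ∩ A).Nonempty}, V

/-- Iterated star: `iterStar U A 0 = A`, `iterStar U A (m+1) = starSet U (iterStar U A m)`. -/
def iterStar {X : Type*} (U : Set (Set X)) (A : Set X) : ℕ → Set X
  | 0 => A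
  | m + 1 => starSet U (iterStar U A m)

/-- A family of sets is a uniform cover of a uniform space if it is refined by the
cover of balls of some entourage. -/
def IsUniformCover {X : Type*} [UniformSpace X] (U : Set (Set X)) : Prop :=
  ∃ V ∈ uniformity X, ∀ x : X, ∃ W ∈ U, UniformSpace.ball x V ⊆ W

/-- `B` is Bourbaki-bounded in a uniform space: every uniform cover has finitely many
members whose iterated stars cover `B`. -/
def IsBourbakiBoundedIn {X : Type*} [UniformSpace X] (B : Set X) : Prop :=
  ∀ U : Set (Set X), IsUniformCover U →
    ∃ m : ℕ, ∃ s : Set (Set X), s ⊆ U ∧ s.Finite ∧ B ⊆ ⋃ W ∈ s, iterStar U W m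

/-- A filter on a uniform space is Bourbaki-Cauchy if for every uniform cover some
iterated star of a member of the cover belongs to the filter. -/
def BourbakiCauchyFilter {X : Type*} [UniformSpace X] (F : Filter X) : Prop :=
  ∀ U : Set (Set X), IsUniformCover U → ∃ m : ℕ, ∃ W ∈ U, iterStar U W m ∈ F

/-- A uniform space is Bourbaki-complete if every (proper) Bourbaki-Cauchy filter
has a cluster point. -/
def BourbakiComplete (X : Type*) [UniformSpace X] : Prop :=
  ∀ F : Filter X, F.NeBot → BourbakiCauchyFilter F → ∃ x : X, ClusterPt x F

/-- A uniform space is compact iff it is Bourbaki-bounded and Bourbaki-complete. -/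
theorem compact_iff_bourbakiBounded_and_bourbakiComplete
    (X : Type*) [UniformSpace X] :
    CompactSpace X ↔ IsBourbakiBoundedIn (Set.univ : Set X) ∧ BourbakiComplete X := by
  constructor
  · intro hc
    constructor
    · intro U hU
      obtain ⟨V, hV, hball⟩ := hU
      obtain ⟨t, htf, hcov⟩ := isCompact_univ.totallyBounded _ (tendsto_swap_uniformity hV)
      choose W hWU hWb using hball
      refine ⟨0, W '' t, ?_, htf.image W, ?_⟩
      · rintro _ ⟨y, _, rfl⟩; exact hWU y
      · intro x _
        obtain ⟨y, hy, hxy⟩ := mem_iUnion₂.1 (hcov (mem_univ x))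
        exact mem_iUnion₂.2 ⟨W y, ⟨y, hy, rfl⟩, hWb y hxy⟩
    · intro F hF _
      haveI := hF
      obtain ⟨x, -, hx⟩ := isCompact_univ.exists_clusterPt (f := F) (le_principal_iff.2 univ_mem)
      exact ⟨x, hx⟩
  · rintro ⟨hBB, hBC⟩
    refine ⟨isCompact_iff_ultrafilter_le_nhds.2 fun f _ => ?_⟩
    have hcau : BourbakiCauchyFilter (f : Filter X) := by
      intro U hU
      obtain ⟨m, s, hsU, hsf, hcov⟩ := hBB U hU
      have hmem : (⋃ W ∈ s, iterStar U W m) ∈ f := mem_of_superset univ_mem hcov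
      obtain ⟨Wm, hWs, hWf⟩ := (Ultrafilter.finite_biUnion_mem_iff hsf).1 hmem
      exact ⟨m, Wm, hsU hWs, hWf⟩
    obtain ⟨x, hx⟩ := hBC f f.neBot hcau
    exact ⟨x, mem_univ x, Ultrafilter.clusterPt_iff.1 hx⟩
end

section
/- A nonempty product of uniform spaces (with the product uniformity) is Bourbaki-complete if and only if each factor is Bourbaki-complete. -/
open Filter Set Topology

theorem starSet_mono {X : Type*} (U : Set (Set X)) {A B : Set X} (h : A ⊆ B) :
    starSet U A ⊆ starSet U B := by
  intro x hx
  simp only [starSet, mem_iUnion, exists_prop, mem_sep_iff] at hx ⊢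
  obtain ⟨V, ⟨hVU, y, hy1, hy2⟩, hxV⟩ := hx
  exact ⟨V, ⟨hVU, y, hy1, h hy2⟩, hxV⟩

theorem iterStar_mono {X : Type*} (U : Set (Set X)) {A B : Set X} (h : A ⊆ B) :
    ∀ m, iterStar U A m ⊆ iterStar U B m
  | 0 => h
  | m + 1 => starSet_mono U (iterStar_mono U h m)

theorem image_starSet_subset {X Y : Type*} (f : X → Y) (U : Set (Set Y)) (A : Set X) :
    f '' starSet ((f ⁻¹' ·) '' U) A ⊆ starSet U (f '' A) := by
  rintro _ ⟨x, hx, rfl⟩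
  simp only [starSet, mem_iUnion, exists_prop, mem_sep_iff] at hx ⊢
  obtain ⟨V, ⟨⟨W, hWU, rfl⟩, z, hz1, hz2⟩, hxV⟩ := hx
  exact ⟨W, ⟨hWU, f z, hz1, mem_image_of_mem f hz2⟩, hxV⟩

theorem image_iterStar_subset {X Y : Type*} (f : X → Y) (U : Set (Set Y)) (B : Set Y) :
    ∀ m, f '' iterStar ((f ⁻¹' ·) '' U) (f ⁻¹' B) m ⊆ iterStar U B m
  | 0 => image_preimage_subset f B
  | m + 1 => by
    refine (image_starSet_subset f U _).trans ?_
    exact starSet_mono U (image_iterStar_subset f U B m)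

theorem isUniformCover_preimage {X Y : Type*} [UniformSpace X] [UniformSpace Y]
    {f : X → Y} (hf : UniformContinuous f) {U : Set (Set Y)} (hU : IsUniformCover U) :
    IsUniformCover ((f ⁻¹' ·) '' U) := by
  obtain ⟨V, hV, hball⟩ := hU
  refine ⟨(fun p : X × X => (f p.1, f p.2)) ⁻¹' V, hf hV, fun x => ?_⟩
  obtain ⟨W, hWU, hW⟩ := hball (f x)
  refine ⟨f ⁻¹' W, mem_image_of_mem _ hWU, fun y hy => ?_⟩
  exact hW hy

theorem bourbakiCauchy_map {X Y : Type*} [UniformSpace X] [UniformSpace Y]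
    {f : X → Y} (hf : UniformContinuous f) {F : Filter X}
    (hF : BourbakiCauchyFilter F) : BourbakiCauchyFilter (F.map f) := by
  intro U hU
  obtain ⟨m, W', ⟨W, hWU, rfl⟩, hmem⟩ := hF _ (isUniformCover_preimage hf hU)
  refine ⟨m, W, hWU, ?_⟩
  rw [mem_map]
  exact mem_of_superset hmem (image_subset_iff.mp (image_iterStar_subset f U W m))

theorem bourbakiCauchy_of_le {X : Type*} [UniformSpace X] {F G : Filter X}
    (hle : G ≤ F) (hF : BourbakiCauchyFilter F) : BourbakiCauchyFilter G := by
  intro U hU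
  obtain ⟨m, W, hWU, hmem⟩ := hF U hU
  exact ⟨m, W, hWU, hle hmem⟩

/-- A nonempty product of uniform spaces is Bourbaki-complete iff every factor is. -/
theorem prod_bourbakiComplete_iff {ι : Type*} (X : ι → Type*)
    [∀ i, UniformSpace (X i)] [∀ i, Nonempty (X i)] :
    BourbakiComplete (∀ i, X i) ↔ ∀ i, BourbakiComplete (X i) := by
  classical
  constructor
  · intro h i F hne hF
    let p : ∀ j, X j := fun j => Classical.arbitrary _
    let s : X i → ∀ j, X j := fun x => Function.update p i x
    have hs : UniformContinuous s := by
      rw [uniformContinuous_pi]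
      intro j
      by_cases hj : j = i
      · subst hj
        simp only [s, Function.update_self]
        exact uniformContinuous_id
      · simp only [s, Function.update_of_ne hj]
        exact uniformContinuous_const
    have hGne : (F.map s).NeBot := hne.map s
    obtain ⟨q, hq⟩ := h (F.map s) hGne (bourbakiCauchy_map hs hF)
    have hcomp : (F.map s).map (fun g : ∀ j, X j => g i) = F := by
      rw [Filter.map_map]
      have : ((fun g : ∀ j, X j => g i) ∘ s) = id := by
        funext x
        simp [s, Function.update_self]
      rw [this, Filter.map_id]
    have ht : Tendsto (fun g : ∀ j, X j => g i) (F.map s) F := hcomp.le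
    exact ⟨q i, hq.map (continuous_apply i).continuousAt ht⟩
  · intro h F hne hF
    haveI := hne
    let G : Ultrafilter (∀ i, X i) := Ultrafilter.of F
    have hGle : (G : Filter (∀ i, X i)) ≤ F := Ultrafilter.of_le F
    have hGBC : BourbakiCauchyFilter (G : Filter (∀ i, X i)) :=
      bourbakiCauchy_of_le hGle hF
    have hx : ∀ i, ∃ x : X i, (G : Filter (∀ i, X i)).map (fun g => g i) ≤ 𝓝 x := by
      intro i
      have hcoe : ((G.map (fun g => g i) : Ultrafilter (X i)) : Filter (X i))
          = (G : Filter (∀ i, X i)).map (fun g => g i) := Ultrafilter.coe_map _ _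
      have hmapBC : BourbakiCauchyFilter
          ((G.map (fun g => g i) : Ultrafilter (X i)) : Filter (X i)) := by
        rw [hcoe]; exact bourbakiCauchy_map (Pi.uniformContinuous_proj X i) hGBC
      obtain ⟨x, hx⟩ := h i _ (G.map (fun g => g i)).neBot hmapBC
      refine ⟨x, ?_⟩
      have := (Ultrafilter.clusterPt_iff (f := G.map (fun g => g i)) (x := x)).mp hx
      rwa [hcoe] at this
    choose x hxle using hx
    have hGnhds : (G : Filter (∀ i, X i)) ≤ 𝓝 x := by
      rw [nhds_pi, Filter.le_pi]
      intro i
      exact hxle i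
    have : ClusterPt x (G : Filter (∀ i, X i)) :=
      ClusterPt.of_le_nhds hGnhds
    exact ⟨x, this.mono hGle⟩
end

section
/- Every uniformly locally compact uniform space is cofinally Bourbaki-complete (hence also Bourbaki-complete and cofinally complete). -/
open Filter Set UniformSpace
open scoped Uniformity

/-- A filter is cofinally Bourbaki-Cauchy if for every uniform cover some iterated star
of a member of the cover meets every member of the filter. -/
def CofinallyBourbakiCauchyFilter {X : Type*} [UniformSpace X] (F : Filter X) : Prop :=
  ∀ U : Set (Set X), IsUniformCover U →
    ∃ m : ℕ, ∃ W ∈ U, ∀ S ∈ F, (S ∩ iterStar U W m).Nonempty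

/-- A uniform space is cofinally Bourbaki-complete if every (proper) cofinally
Bourbaki-Cauchy filter has a cluster point. -/
def CofinallyBourbakiComplete (X : Type*) [UniformSpace X] : Prop :=
  ∀ F : Filter X, F.NeBot → CofinallyBourbakiCauchyFilter F → ∃ x : X, ClusterPt x F

/-- A filter is cofinally Cauchy if for every uniform cover some member of the cover
meets every member of the filter. -/
def CofinallyCauchyFilter {X : Type*} [UniformSpace X] (F : Filter X) : Prop :=
  ∀ U : Set (Set X), IsUniformCover U → ∃ W ∈ U, ∀ S ∈ F, (S ∩ W).Nonempty

/-- A uniform space is cofinally complete if every (proper) cofinally Cauchy filter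
has a cluster point. -/
def CofinallyComplete (X : Type*) [UniformSpace X] : Prop :=
  ∀ F : Filter X, F.NeBot → CofinallyCauchyFilter F → ∃ x : X, ClusterPt x F

/-- A uniform space is uniformly locally compact if some uniform cover consists of
sets with compact closure. -/
def UniformlyLocallyCompact (X : Type*) [UniformSpace X] : Prop :=
  ∃ U : Set (Set X), IsUniformCover U ∧ ∀ W ∈ U, IsCompact (closure W)

/-- Every uniformly locally compact uniform space is cofinally Bourbaki-complete
(hence also Bourbaki-complete and cofinally complete). -/
theorem uniformlyLocallyCompact_implies (X : Type*) [UniformSpace X]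
    (h : UniformlyLocallyCompact X) :
    CofinallyBourbakiComplete X ∧ BourbakiComplete X ∧ CofinallyComplete X := by
  obtain ⟨U₀, ⟨V, hV, hVball⟩, hU₀⟩ := h
  -- every ball of V has compact closure
  have hcomp : ∀ x : X, IsCompact (closure (ball x V)) := by
    intro x
    obtain ⟨W, hWU₀, hxW⟩ := hVball x
    exact (hU₀ W hWU₀).of_isClosed_subset isClosed_closure (closure_mono hxW)
  obtain ⟨V₃, hV₃, hV₃symm, hV₃V⟩ := comp_symm_mem_uniformity_sets hV
  obtain ⟨V₂, hV₂, hV₂symm, hV₂V₃⟩ := comp_symm_mem_uniformity_sets hV₃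
  set 𝒱 : Set (Set X) := range (fun x => ball x V₂) with h𝒱
  have hcover : IsUniformCover 𝒱 :=
    ⟨V₂, hV₂, fun x => ⟨ball x V₂, mem_range_self x, subset_rfl⟩⟩
  -- image lemma
  have lemA : ∀ K : Set X, IsCompact K → IsCompact (closure (⋃ a ∈ K, ball a V₃)) := by
    intro K hK
    obtain ⟨t, htK, hcov⟩ := hK.elim_nhds_subcover (fun a => ball a V₃)
      (fun a _ => ball_mem_nhds a hV₃)
    have hsub : (⋃ a ∈ K, ball a V₃) ⊆ ⋃ i ∈ t, closure (ball i V) := by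
      rintro y hy
      simp only [mem_iUnion] at hy
      obtain ⟨a, haK, hay⟩ := hy
      have := hcov haK
      simp only [mem_iUnion] at this
      obtain ⟨i, hit, hia⟩ := this
      refine mem_iUnion₂.2 ⟨i, hit, subset_closure ?_⟩
      exact hV₃V ⟨a, hia, hay⟩
    have hcpt : IsCompact (⋃ i ∈ t, closure (ball i V)) :=
      t.isCompact_biUnion (fun i _ => hcomp i)
    have hcl : IsClosed (⋃ i ∈ t, closure (ball i V)) :=
      t.finite_toSet.isClosed_biUnion (fun i _ => isClosed_closure)
    exact hcpt.of_isClosed_subset isClosed_closure (closure_minimal hsub hcl)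
  -- star is contained in the V₃-image
  have lemB : ∀ A : Set X, starSet 𝒱 A ⊆ ⋃ a ∈ A, ball a V₃ := by
    intro A y hy
    simp only [starSet, mem_iUnion] at hy
    obtain ⟨Vs, ⟨hVs𝒱, a, haVs, haA⟩, hyVs⟩ := hy
    obtain ⟨x, rfl⟩ := hVs𝒱
    have hax : (a, x) ∈ V₂ := hV₂symm.symm _ _ haVs
    refine mem_iUnion₂.2 ⟨a, haA, ?_⟩
    exact hV₂V₃ ⟨x, hax, hyVs⟩
  -- iterated stars of balls of V₂ have compact closures
  have lemC : ∀ (x : X) (m : ℕ), IsCompact (closure (iterStar 𝒱 (ball x V₂) m)) := by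
    intro x m
    induction m with
    | zero =>
      have hsub : ball x V₂ ⊆ ball x V := by
        intro y hy
        exact hV₃V ⟨y, hV₂V₃ ⟨y, hy, refl_mem_uniformity hV₂⟩, refl_mem_uniformity hV₃⟩
      exact (hcomp x).of_isClosed_subset isClosed_closure (closure_mono hsub)
    | succ m ih =>
      have hsub : iterStar 𝒱 (ball x V₂) (m + 1) ⊆
          ⋃ a ∈ closure (iterStar 𝒱 (ball x V₂) m), ball a V₃ := by
        refine (lemB _).trans ?_
        exact iUnion₂_subset fun a ha => subset_iUnion₂ (s := fun a _ => ball a V₃) a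
          (subset_closure ha)
      have hcpt := lemA _ ih
      exact hcpt.of_isClosed_subset isClosed_closure (closure_mono hsub)
  -- main: cofinally Bourbaki-complete
  have hCBC : CofinallyBourbakiComplete X := by
    intro F hne hF
    obtain ⟨m, W, hW𝒱, hmeet⟩ := hF 𝒱 hcover
    obtain ⟨x, rfl⟩ := hW𝒱
    set K := closure (iterStar 𝒱 (ball x V₂) m) with hK
    have hKcpt : IsCompact K := lemC x m
    have hneBot : (F ⊓ 𝓟 K).NeBot := by
      rw [Filter.inf_principal_neBot_iff]
      intro S hS
      exact (hmeet S hS).mono (inter_subset_inter_right S subset_closure)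
    obtain ⟨y, _, hy⟩ := hKcpt (f := F ⊓ 𝓟 K) inf_le_right
    exact ⟨y, hy.mono inf_le_left⟩
  refine ⟨hCBC, ?_, ?_⟩
  · intro F hne hF
    refine hCBC F hne fun U hU => ?_
    obtain ⟨m, W, hWU, hT⟩ := hF U hU
    exact ⟨m, W, hWU, fun S hS => Filter.nonempty_of_mem (Filter.inter_mem hS hT)⟩
  · intro F hne hF
    refine hCBC F hne fun U hU => ?_
    obtain ⟨W, hWU, hT⟩ := hF U hU
    exact ⟨0, W, hWU, hT⟩
end
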